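/- Fix h ∈ ℝ, J > 0, and set M := max_{x ∈ ℝ} p̃(x). Let 𝒞 be any closed (possibly unbounded) subset of ℝ containing no global maximum point of p̃. Then there exists ε > 0 such that e^{−N·M}·∫_𝒞 e^{N·F_N(x)} dx = O(e^{−N·ε}) as N → ∞, i.e. the sequence e^{N(ε−M)}·∫_𝒞 e^{N·F_N(x)} dx is bounded in N. -/

import Mathlib

open MeasureTheory Filter Real

noncomputable section

/-- A dimer configuration on the complete graph `K_N`: a set of non-loop edges
that are pairwise non-incident (a matching). -/
def IsDimerConfig (N : ℕ) (D : Finset (Sym2 (Fin N))) : Prop :=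
  (∀ e ∈ D, ¬ e.IsDiag) ∧
  ∀ e ∈ D, ∀ f ∈ D, e ≠ f → ∀ v : Fin N, ¬(v ∈ e ∧ v ∈ f)

open Classical in
/-- The configuration space `𝒟_N` of all dimer configurations on `K_N`. -/
noncomputable def dimerConfigs (N : ℕ) : Finset (Finset (Sym2 (Fin N))) :=
  Finset.univ.filter (fun D => IsDimerConfig N D)

/-- The number of monomers `S_N(D) = N - 2|D|` (as a real number). -/
def monomerCount (N : ℕ) (D : Finset (Sym2 (Fin N))) : ℝ := (N : ℝ) - 2 * D.card

/-- The monomer density `m_N(D) = S_N(D)/N`. -/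
def monomerDensity (N : ℕ) (D : Finset (Sym2 (Fin N))) : ℝ := monomerCount N D / N

/-- `g(h) = (e^h/2)(√(e^{2h}+4) − e^h)`. -/
def gFun (h : ℝ) : ℝ := Real.exp h / 2 * (Real.sqrt (Real.exp (2*h) + 4) - Real.exp h)

/-- `p⁰(h) = −(1−g(h))/2 − (1/2)·log(1−g(h))`. -/
def p0 (h : ℝ) : ℝ := -(1 - gFun h)/2 - (1/2) * Real.log (1 - gFun h)

/-- Variational pressure `p̃(m) = −Jm² + p⁰((2m−1)J + h)`. -/
def ptilde (h J m : ℝ) : ℝ := -J * m^2 + p0 ((2*m - 1) * J + h)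

/-- Pure hard-core partition function `Z_N⁰(a) = Σ_D N^{−|D|} e^{a·S_N(D)}`. -/
def Z0 (N : ℕ) (a : ℝ) : ℝ :=
  ∑ D ∈ dimerConfigs N, (N : ℝ) ^ (-(D.card : ℤ)) * Real.exp (a * monomerCount N D)

/-- Pure hard-core pressure density `p_N⁰(a) = (1/N) log Z_N⁰(a)`. -/
def p0N (N : ℕ) (a : ℝ) : ℝ := (1 / (N : ℝ)) * Real.log (Z0 N a)

/-- Minus the IMD Hamiltonian: `−H_N(D) = N((h−J)m_N(D) + J m_N(D)²)`. -/
def negH (N : ℕ) (h J : ℝ) (D : Finset (Sym2 (Fin N))) : ℝ :=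
  (N : ℝ) * ((h - J) * monomerDensity N D + J * (monomerDensity N D)^2)

/-- The IMD partition function `Z_N = Σ_D N^{−|D|} e^{−H_N(D)}`. -/
def ZIMD (N : ℕ) (h J : ℝ) : ℝ :=
  ∑ D ∈ dimerConfigs N, (N : ℝ) ^ (-(D.card : ℤ)) * Real.exp (negH N h J D)

/-- The IMD pressure density `p_N = (1/N) log Z_N`. -/
def pIMD (N : ℕ) (h J : ℝ) : ℝ := (1 / (N : ℝ)) * Real.log (ZIMD N h J)

/-- Expectation of an observable `f` under the IMD Gibbs measure `μ_N`. -/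
def gibbsExp (N : ℕ) (h J : ℝ) (f : Finset (Sym2 (Fin N)) → ℝ) : ℝ :=
  (∑ D ∈ dimerConfigs N, (N : ℝ) ^ (-(D.card : ℤ)) * Real.exp (negH N h J D) * f D)
    / ZIMD N h J

/-- `F_N(x) = −Jx² + p_N⁰(2Jx + h − J)`. -/
def FN (h J : ℝ) (N : ℕ) (x : ℝ) : ℝ := -J * x^2 + p0N N (2*J*x + h - J)


namespace LaplaceAux


def sel {N : ℕ} (e : Sym2 (Fin N)) (t : Bool) : Fin N := if t then e.out.1 else e.out.2

lemma sel_mem {N : ℕ} (e : Sym2 (Fin N)) (t : Bool) : sel e t ∈ e := by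
  cases t
  · simpa [sel] using Sym2.out_snd_mem e
  · simpa [sel] using Sym2.out_fst_mem e

lemma mk_base {N : ℕ} (e : Sym2 (Fin N)) : s(e.out.1, e.out.2) = e := by
  show Quot.mk _ e.out = e
  exact e.out_eq

lemma mk_sel {N : ℕ} (e : Sym2 (Fin N)) (c : Bool) :
    s(sel e (xor true c), sel e (xor false c)) = e := by
  cases c
  · simpa [sel] using mk_base e
  · rw [Sym2.eq_swap]
    simpa [sel] using mk_base e

lemma mk_base_eq {N : ℕ} (e : Sym2 (Fin N)) : Sym2.mk e.out.1 e.out.2 = e := by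
  conv_rhs => rw [← mk_base e]

lemma sel_ne {N : ℕ} (e : Sym2 (Fin N)) (he : ¬ e.IsDiag) : sel e true ≠ sel e false := by
  intro hcontr
  apply he
  have h2 : Sym2.IsDiag (Sym2.mk e.out.1 e.out.2) := (Sym2.isDiag_iff_proj_eq).mpr (by simpa [sel] using hcontr)
  rwa [mk_base_eq e] at h2

lemma sel_ne' {N : ℕ} (e : Sym2 (Fin N)) (he : ¬ e.IsDiag) {x y : Bool} (hxy : x ≠ y) :
    sel e x ≠ sel e y := by
  cases x <;> cases y <;> simp at hxy ⊢
  · exact (sel_ne e he).symm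
  · exact sel_ne e he

lemma matching_count (N k : ℕ) :
    ((dimerConfigs N).filter (fun D => D.card = k)).card * (k.factorial * 2 ^ k)
      ≤ N.descFactorial (2 * k) := by
  classical
  set S := (dimerConfigs N).filter (fun D => D.card = k) with hS
  have hcard : ∀ D ∈ S, D.card = k := fun D hD => (Finset.mem_filter.mp hD).2
  have hdim : ∀ D ∈ S, IsDimerConfig N D := fun D hD => by
    have h1 := (Finset.mem_filter.mp hD).1
    simpa [dimerConfigs] using h1
  -- enumeration of a matching in S
  let enum : ∀ D : ↥S, Fin k → Sym2 (Fin N) := fun D i =>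
    ((D.1.equivFin.symm) (Fin.cast (hcard D.1 D.2).symm i) : Sym2 (Fin N))
  have enum_mem : ∀ (D : ↥S) (i : Fin k), enum D i ∈ D.1 := fun D i =>
    ((D.1.equivFin.symm) (Fin.cast (hcard D.1 D.2).symm i)).2
  have enum_inj : ∀ D : ↥S, Function.Injective (enum D) := by
    intro D i j hij
    have := Subtype.ext hij
    have := (D.1.equivFin.symm).injective this
    simpa [Fin.ext_iff] using this
  have enum_surj : ∀ (D : ↥S) (e) (_ : e ∈ D.1), ∃ i, enum D i = e := by
    intro D e he
    refine ⟨Fin.cast (hcard D.1 D.2) (D.1.equivFin ⟨e, he⟩), ?_⟩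
    simp [enum]
  -- the injection
  let F : ↥S × Equiv.Perm (Fin k) × (Fin k → Bool) → ((Fin k × Bool) → Fin N) :=
    fun x p => sel (enum x.1 (x.2.1 p.1)) (xor p.2 (x.2.2 p.1))
  have Finj : ∀ x, Function.Injective (F x) := by
    rintro ⟨D, σ, b⟩ ⟨i, t⟩ ⟨i', t'⟩ hv
    simp only [F] at hv
    by_cases hii : i = i'
    · subst hii
      by_cases htt : t = t'
      · rw [htt]
      · exfalso
        have hne : xor t (b i) ≠ xor t' (b i) := by
          cases t <;> cases t' <;> simp_all
        exact sel_ne' _ ((hdim D.1 D.2).1 _ (enum_mem D (σ i))) hne hv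
    · exfalso
      have hee : enum D (σ i) ≠ enum D (σ i') := fun hc => hii (σ.injective (enum_inj D hc))
      exact (hdim D.1 D.2).2 _ (enum_mem D (σ i)) _ (enum_mem D (σ i')) hee _
        ⟨sel_mem _ _, by rw [hv]; exact sel_mem _ _⟩
  have Fbiginj : Function.Injective (fun x => (⟨F x, Finj x⟩ : (Fin k × Bool) ↪ Fin N)) := by
    rintro ⟨D, σ, b⟩ ⟨D', σ', b'⟩ hEq
    have hf : ∀ i t, sel (enum D (σ i)) (xor t (b i)) = sel (enum D' (σ' i)) (xor t (b' i)) := by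
      intro i t
      have := congrArg (fun (g : (Fin k × Bool) ↪ Fin N) => g (i, t)) hEq
      simpa [F] using this
    have hedge : ∀ i, enum D (σ i) = enum D' (σ' i) := by
      intro i
      calc enum D (σ i) = s(sel (enum D (σ i)) (xor true (b i)),
            sel (enum D (σ i)) (xor false (b i))) := (mk_sel _ _).symm
        _ = s(sel (enum D' (σ' i)) (xor true (b' i)),
            sel (enum D' (σ' i)) (xor false (b' i))) := by rw [hf i true, hf i false]
        _ = enum D' (σ' i) := mk_sel _ _
    have hDD : D = D' := by
      apply Subtype.ext
      apply Finset.ext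
      intro e
      constructor
      · intro he
        obtain ⟨j, hj⟩ := enum_surj D e he
        have : enum D' (σ' (σ.symm j)) = e := by rw [← hedge, Equiv.apply_symm_apply, hj]
        exact this ▸ enum_mem D' _
      · intro he
        obtain ⟨j, hj⟩ := enum_surj D' e he
        have : enum D (σ (σ'.symm j)) = e := by rw [hedge, Equiv.apply_symm_apply, hj]
        exact this ▸ enum_mem D _
    subst hDD
    have hσ : σ = σ' := by
      apply Equiv.ext
      intro i
      exact enum_inj D (hedge i)
    subst hσ
    have hb : b = b' := by
      funext i
      by_contra hbi
      have hne : xor true (b i) ≠ xor true (b' i) := by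
        cases hC : b i <;> cases hC' : b' i <;> simp_all
      exact sel_ne' _ ((hdim D.1 D.2).1 _ (enum_mem D (σ i))) hne
        (by simpa [hedge i] using hf i true)
    subst hb
    rfl
  have hle := Fintype.card_le_of_injective _ Fbiginj
  have h1 : Fintype.card (↥S × Equiv.Perm (Fin k) × (Fin k → Bool))
      = S.card * (k.factorial * 2 ^ k) := by
    simp [Fintype.card_perm]
  have h2 : Fintype.card ((Fin k × Bool) ↪ Fin N) = N.descFactorial (2 * k) := by
    rw [Fintype.card_embedding_eq]
    simp [two_mul, mul_comm]
  rw [h1, h2] at hle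
  exact hle



lemma exp_two_mul (a : ℝ) : Real.exp (2*a) = Real.exp a ^ 2 := by
  rw [two_mul, Real.exp_add]; ring

lemma sqrt_sq' (a : ℝ) : Real.sqrt (Real.exp (2*a) + 4) ^ 2 = Real.exp (2*a) + 4 :=
  Real.sq_sqrt (by positivity)

lemma g_pos (a : ℝ) : 0 < gFun a := by
  unfold gFun
  have h2 := Real.exp_pos a
  have h1 : Real.exp a < Real.sqrt (Real.exp (2*a) + 4) := by
    rw [Real.lt_sqrt h2.le, exp_two_mul]
    nlinarith
  nlinarith

lemma g_lt_one (a : ℝ) : gFun a < 1 := by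
  unfold gFun
  set E := Real.exp a with hE
  set r := Real.sqrt (Real.exp (2*a) + 4) with hr
  have h1 : r ^ 2 = E^2 + 4 := by rw [sqrt_sq', exp_two_mul]
  have h2 : 0 < E := Real.exp_pos a
  have h3 : 0 ≤ r := Real.sqrt_nonneg _
  nlinarith [sq_nonneg (E*r - E^2 - 2)]

lemma g_sq (a : ℝ) : gFun a ^ 2 = Real.exp (2*a) * (1 - gFun a) := by
  have h1 : Real.sqrt (Real.exp a ^ 2 + 4) ^ 2 = Real.exp a ^ 2 + 4 :=
    Real.sq_sqrt (by positivity)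
  unfold gFun
  rw [exp_two_mul]
  linear_combination (Real.exp a ^ 2 / 4) * h1

lemma one_sub_g_pos (a : ℝ) : 0 < 1 - gFun a := by linarith [g_lt_one a]

lemma log_one_sub_g (a : ℝ) : Real.log (1 - gFun a) = 2 * Real.log (gFun a) - 2*a := by
  have h1 : 1 - gFun a = gFun a ^ 2 * Real.exp (-(2*a)) := by
    have hsq := g_sq a
    have he := Real.exp_pos (2*a)
    rw [Real.exp_neg]
    field_simp
    linarith [hsq]
  rw [h1, Real.log_mul (pow_ne_zero 2 (ne_of_gt (g_pos a))) (Real.exp_ne_zero _),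
    Real.log_pow, Real.log_exp]
  push_cast
  ring

lemma p0_eq (a : ℝ) : p0 a = -(1 - gFun a)/2 - Real.log (gFun a) + a := by
  unfold p0
  rw [log_one_sub_g]
  ring

lemma gibbs {x y : ℝ} (hx : 0 ≤ x) (hy : 0 < y) :
    x * Real.log y + x - y ≤ x * Real.log x := by
  rcases eq_or_lt_of_le hx with h | h
  · simp [← h]; linarith
  · have hlog : Real.log (y/x) ≤ y/x - 1 := Real.log_le_sub_one_of_pos (by positivity)
    rw [Real.log_div (ne_of_gt hy) (ne_of_gt h)] at hlog
    have := mul_le_mul_of_nonneg_left hlog hx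
    have hxx : x * (y/x - 1) = y - x := by field_simp
    nlinarith

lemma key (a u s : ℝ) (hu : 0 ≤ u) (hs : 0 ≤ s) (hus : u + s = 1) :
    -u/2 - u/2 * Real.log u - s * Real.log s + a*s ≤ p0 a := by
  have hs' : s = 1 - u := by linarith
  subst hs'
  have h1 := gibbs hu (one_sub_g_pos a)
  have h2 := gibbs hs (g_pos a)
  rw [log_one_sub_g] at h1
  rw [p0_eq]
  nlinarith [h1, h2]

lemma p0_le (a : ℝ) : p0 a ≤ Real.log 2 + max a 0 := by
  have hE := Real.exp_pos a
  have hE1 : (0:ℝ) < Real.exp a + 1 := by positivity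
  -- lower bound on g
  have hglow : Real.exp a / (Real.exp a + 1) ≤ gFun a := by
    have h3 : 0 ≤ Real.sqrt (Real.exp (2*a) + 4) := Real.sqrt_nonneg _
    have hpos : (0:ℝ) ≤ Real.exp a + 2/(Real.exp a+1) := by positivity
    have hrge : Real.exp a + 2/(Real.exp a+1) ≤ Real.sqrt (Real.exp (2*a) + 4) := by
      rw [Real.le_sqrt hpos (by positivity), exp_two_mul]
      have hclear : (Real.exp a + 2/(Real.exp a+1)) * (Real.exp a+1)
          = Real.exp a * (Real.exp a + 1) + 2 := by field_simp
      have hmul : (Real.exp a + 2/(Real.exp a+1))^2 * (Real.exp a+1)^2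
          ≤ (Real.exp a^2 + 4) * (Real.exp a+1)^2 := by
        calc (Real.exp a + 2/(Real.exp a+1))^2 * (Real.exp a+1)^2
            = ((Real.exp a + 2/(Real.exp a+1)) * (Real.exp a+1))^2 := by ring
          _ = (Real.exp a * (Real.exp a+1) + 2)^2 := by rw [hclear]
          _ ≤ (Real.exp a^2 + 4) * (Real.exp a+1)^2 := by nlinarith
      exact le_of_mul_le_mul_right hmul (by positivity)
    unfold gFun
    rw [div_le_iff₀ hE1]
    have h5 : 2/(Real.exp a + 1) ≤ Real.sqrt (Real.exp (2*a) + 4) - Real.exp a := by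
      linarith
    have h6 : Real.exp a / 2 * (2/(Real.exp a+1))
        ≤ Real.exp a / 2 * (Real.sqrt (Real.exp (2*a) + 4) - Real.exp a) :=
      mul_le_mul_of_nonneg_left h5 (by positivity)
    have h7 : Real.exp a / 2 * (2/(Real.exp a+1)) * (Real.exp a + 1) = Real.exp a := by
      field_simp
    calc Real.exp a = Real.exp a / 2 * (2/(Real.exp a+1)) * (Real.exp a + 1) := h7.symm
      _ ≤ Real.exp a / 2 * (Real.sqrt (Real.exp (2*a) + 4) - Real.exp a) * (Real.exp a + 1) :=
          mul_le_mul_of_nonneg_right h6 (by positivity)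
  have hlogg : a - Real.log (Real.exp a + 1) ≤ Real.log (gFun a) := by
    have h1 : Real.log (Real.exp a / (Real.exp a+1)) ≤ Real.log (gFun a) :=
      Real.log_le_log (by positivity) hglow
    rw [Real.log_div (ne_of_gt hE) (by positivity), Real.log_exp] at h1
    exact h1
  have hlogE : Real.log (Real.exp a + 1) ≤ Real.log 2 + max a 0 := by
    have h1 : Real.exp a + 1 ≤ 2 * Real.exp (max a 0) := by
      have l1 : Real.exp a ≤ Real.exp (max a 0) := Real.exp_le_exp.mpr (le_max_left a 0)
      have l2 : (1:ℝ) ≤ Real.exp (max a 0) := by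
        rw [show (1:ℝ) = Real.exp 0 by simp]
        exact Real.exp_le_exp.mpr (le_max_right a 0)
      linarith
    calc Real.log (Real.exp a + 1) ≤ Real.log (2 * Real.exp (max a 0)) :=
          Real.log_le_log (by positivity) h1
      _ = Real.log 2 + max a 0 := by
          rw [Real.log_mul (by norm_num) (by positivity), Real.log_exp]
  have := one_sub_g_pos a
  rw [p0_eq]
  linarith

-- factorial bounds
lemma log_factorial_ge (n : ℕ) : (n:ℝ) * Real.log n - n ≤ Real.log (n.factorial) := by
  induction n with
  | zero => simp
  | succ n ih =>
    have hfact : Real.log ((n+1).factorial) = Real.log (n+1) + Real.log (n.factorial) := by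
      rw [Nat.factorial_succ]
      push_cast
      rw [Real.log_mul (by positivity) (by exact_mod_cast Nat.cast_ne_zero.mpr n.factorial_ne_zero)]
    rw [hfact]
    have hstep : (n:ℝ) * (Real.log (n+1) - Real.log n) ≤ 1 := by
      rcases Nat.eq_zero_or_pos n with h | h
      · simp [h]
      · have hn : (0:ℝ) < n := by exact_mod_cast h
        have : Real.log ((n+1)/n) ≤ (n+1)/n - 1 := Real.log_le_sub_one_of_pos (by positivity)
        rw [Real.log_div (by positivity) (ne_of_gt hn)] at this
        have h2 : ((n:ℝ)+1)/n - 1 = 1/n := by field_simp; ring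
        rw [h2] at this
        calc (n:ℝ) * (Real.log (n+1) - Real.log n) ≤ (n:ℝ) * (1/n) :=
              mul_le_mul_of_nonneg_left this (le_of_lt hn)
          _ = 1 := by field_simp
    push_cast
    nlinarith [ih]

lemma log_factorial_le (n : ℕ) (hn : 1 ≤ n) :
    Real.log (n.factorial) ≤ 1 + Real.log n + ((n:ℝ) * Real.log n - n) := by
  induction n with
  | zero => omega
  | succ n ih =>
    rcases Nat.eq_zero_or_pos n with h | h
    · subst h; simp
    · have ihn := ih h
      have hn : (0:ℝ) < n := by exact_mod_cast h
      have hfact : Real.log ((n+1).factorial) = Real.log (n+1) + Real.log (n.factorial) := by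
        rw [Nat.factorial_succ]
        push_cast
        rw [Real.log_mul (by positivity) (by exact_mod_cast Nat.cast_ne_zero.mpr n.factorial_ne_zero)]
      rw [hfact]
      have hstep : (1:ℝ) ≤ ((n:ℝ)+1) * (Real.log (n+1) - Real.log n) := by
        have hx : Real.log ((n:ℝ)/(n+1)) ≤ (n:ℝ)/(n+1) - 1 := Real.log_le_sub_one_of_pos (by positivity)
        rw [Real.log_div (ne_of_gt hn) (by positivity)] at hx
        have h2 : (n:ℝ)/(n+1) - 1 = -(1/(n+1)) := by field_simp; ring
        rw [h2] at hx
        have h3 : 1/((n:ℝ)+1) ≤ Real.log (n+1) - Real.log n := by linarith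
        calc (1:ℝ) = ((n:ℝ)+1) * (1/((n:ℝ)+1)) := by field_simp
          _ ≤ ((n:ℝ)+1) * (Real.log (n+1) - Real.log n) :=
              mul_le_mul_of_nonneg_left h3 (by positivity)
      push_cast
      nlinarith [ihn]


lemma two_card_le (N : ℕ) (D : Finset (Sym2 (Fin N))) (hD : D ∈ dimerConfigs N) :
    2 * D.card ≤ N := by
  classical
  by_contra hlt
  have h := matching_count N D.card
  have hmem : D ∈ (dimerConfigs N).filter (fun E => E.card = D.card) :=
    Finset.mem_filter.mpr ⟨hD, rfl⟩
  have hpos : 1 ≤ ((dimerConfigs N).filter (fun E => E.card = D.card)).card :=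
    Finset.card_pos.mpr ⟨D, hmem⟩
  have hz : N.descFactorial (2*D.card) = 0 := Nat.descFactorial_eq_zero_iff_lt.mpr (by omega)
  rw [hz] at h
  have h1 : 1 ≤ D.card.factorial * 2 ^ D.card :=
    Nat.one_le_iff_ne_zero.mpr (Nat.mul_ne_zero D.card.factorial_ne_zero (by positivity))
  have h2 : 1 * 1 ≤ ((dimerConfigs N).filter (fun E => E.card = D.card)).card
      * (D.card.factorial * 2 ^ D.card) := Nat.mul_le_mul hpos h1
  omega

lemma term_bound (N k : ℕ) (a : ℝ) (hN : 1 ≤ N) (hk : 2*k ≤ N) :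
    (N.descFactorial (2*k) : ℝ) * ((N:ℝ)^(-(k:ℤ)) * Real.exp (a * ((N:ℝ) - 2*k)))
      ≤ (k.factorial : ℝ) * 2^k * (Real.exp 1 * N * Real.exp ((N:ℝ) * p0 a)) := by
  have Npos : (0:ℝ) < N := by exact_mod_cast Nat.lt_of_lt_of_le Nat.zero_lt_one hN
  set m := N - 2*k with hmdef
  have hNm : 2*k + m = N := by omega
  have hm : (m:ℝ) = (N:ℝ) - 2*k := by
    have : ((2*k + m : ℕ) : ℝ) = (N:ℝ) := by exact_mod_cast congrArg (Nat.cast : ℕ → ℝ) hNm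
    push_cast at this
    linarith
  have hNcast : (N:ℝ) = 2*(k:ℝ) + m := by linarith
  -- descFactorial and factorial facts
  have hdesc : (m.factorial : ℝ) * (N.descFactorial (2*k) : ℝ) = (N.factorial : ℝ) := by
    exact_mod_cast congrArg (Nat.cast : ℕ → ℝ) (Nat.factorial_mul_descFactorial hk)
  have hdFpos : (0:ℝ) < (N.descFactorial (2*k) : ℝ) := by
    have : 0 < N.descFactorial (2*k) := by
      rcases Nat.eq_zero_or_pos (N.descFactorial (2*k)) with h | h
      · exfalso; have := Nat.descFactorial_eq_zero_iff_lt.mp h; omega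
      · exact h
    exact_mod_cast this
  have hmfpos : (0:ℝ) < (m.factorial : ℝ) := by exact_mod_cast m.factorial_pos
  have hkfpos : (0:ℝ) < (k.factorial : ℝ) := by exact_mod_cast k.factorial_pos
  have hNfpos : (0:ℝ) < (N.factorial : ℝ) := by exact_mod_cast N.factorial_pos
  have hlogdesc : Real.log (N.descFactorial (2*k) : ℝ)
      = Real.log (N.factorial : ℝ) - Real.log (m.factorial : ℝ) := by
    rw [← hdesc, Real.log_mul (ne_of_gt hmfpos) (ne_of_gt hdFpos)]
    ring
  -- the key inequality, scaled by N
  have hkey := key a (2*(k:ℝ)/(N:ℝ)) ((m:ℝ)/(N:ℝ)) (by positivity) (by positivity)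
    (by field_simp; linarith)
  have h2 := mul_le_mul_of_nonneg_left hkey (le_of_lt Npos)
  have e : (N:ℝ) * (-(2*(k:ℝ)/(N:ℝ))/2 - 2*(k:ℝ)/(N:ℝ)/2 * Real.log (2*(k:ℝ)/(N:ℝ))
        - (m:ℝ)/(N:ℝ) * Real.log ((m:ℝ)/(N:ℝ)) + a*((m:ℝ)/(N:ℝ)))
      = -(k:ℝ) - (k:ℝ) * Real.log (2*(k:ℝ)/(N:ℝ)) - (m:ℝ) * Real.log ((m:ℝ)/(N:ℝ)) + a*(m:ℝ) := by
    field_simp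
  have hkey2 : -(k:ℝ) - (k:ℝ) * Real.log (2*(k:ℝ)/(N:ℝ)) - (m:ℝ) * Real.log ((m:ℝ)/(N:ℝ))
      + a*(m:ℝ) ≤ (N:ℝ) * p0 a := by linarith [h2, e]
  -- log expansions
  have hlogk : (k:ℝ) * Real.log (2*(k:ℝ)/(N:ℝ))
      = k * Real.log 2 + k * Real.log k - k * Real.log N := by
    rcases Nat.eq_zero_or_pos k with h | h
    · simp [h]
    · have hk0 : ((k:ℝ)) ≠ 0 := by positivity
      rw [Real.log_div (by positivity) (ne_of_gt Npos), Real.log_mul two_ne_zero hk0]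
      ring
  have hlogm : (m:ℝ) * Real.log ((m:ℝ)/(N:ℝ)) = m * Real.log m - m * Real.log N := by
    rcases Nat.eq_zero_or_pos m with h | h
    · simp [h]
    · have hm0 : ((m:ℝ)) ≠ 0 := by positivity
      rw [Real.log_div hm0 (ne_of_gt Npos)]
      ring
  have hNlog : (N:ℝ) * Real.log N = 2*(k:ℝ)*Real.log N + (m:ℝ) * Real.log N := by
    linear_combination (Real.log (N:ℝ)) * hNcast
  -- factorial log bounds
  have lN := log_factorial_le N hN
  have lm := log_factorial_ge m
  have lk := log_factorial_ge k
  -- main log inequality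
  have main : Real.log (N.factorial : ℝ) - Real.log (m.factorial : ℝ)
      + (-(k:ℝ))*Real.log N + a*((N:ℝ) - 2*k)
      ≤ Real.log (k.factorial : ℝ) + k*Real.log 2 + (1 + Real.log N + (N:ℝ) * p0 a) := by
    have ham : a * ((N:ℝ) - 2*(k:ℝ)) = a * (m:ℝ) := by rw [← hm]
    linarith [hkey2, hlogk, hlogm, hNlog, lN, lm, lk, ham]
  -- conclude via exp/log
  have hL : (0:ℝ) < (N.descFactorial (2*k) : ℝ) * ((N:ℝ)^(-(k:ℤ)) * Real.exp (a * ((N:ℝ) - 2*k))) := by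
    have hz : (0:ℝ) < (N:ℝ)^(-(k:ℤ)) := zpow_pos Npos _
    positivity
  have hR : (0:ℝ) < (k.factorial : ℝ) * 2^k * (Real.exp 1 * N * Real.exp ((N:ℝ) * p0 a)) := by
    positivity
  rw [← Real.log_le_log_iff hL hR]
  have hz : (0:ℝ) < (N:ℝ)^(-(k:ℤ)) := zpow_pos Npos _
  rw [Real.log_mul (ne_of_gt hdFpos) (by positivity),
      Real.log_mul (ne_of_gt hz) (Real.exp_ne_zero _),
      Real.log_mul (by positivity) (by positivity),
      Real.log_mul (by positivity) (by norm_num : ((2:ℝ)^k) ≠ 0),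
      Real.log_mul (by positivity : (Real.exp 1 * (N:ℝ)) ≠ 0) (Real.exp_ne_zero _),
      Real.log_mul (Real.exp_ne_zero _) (ne_of_gt Npos),
      Real.log_zpow, Real.log_pow, Real.log_exp, Real.log_exp, Real.log_exp, hlogdesc]
  push_cast
  linarith [main]

lemma Z0_pos (N : ℕ) (a : ℝ) : 0 < Z0 N a := by
  classical
  have hempty : (∅ : Finset (Sym2 (Fin N))) ∈ dimerConfigs N := by
    simp [dimerConfigs, IsDimerConfig]
  refine Finset.sum_pos' (fun D _ => ?_) ⟨∅, hempty, ?_⟩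
  · have h1 : (0:ℝ) ≤ (N:ℝ)^(-(D.card:ℤ)) := zpow_nonneg (Nat.cast_nonneg N) _
    positivity
  · simp [monomerCount]
    positivity

lemma Z0_le (N : ℕ) (a : ℝ) (hN : 1 ≤ N) :
    Z0 N a ≤ ((N:ℝ)+1) * (Real.exp 1 * N * Real.exp ((N:ℝ) * p0 a)) := by
  classical
  have hmaps : ∀ D ∈ dimerConfigs N, D.card ∈ Finset.range (N+1) := by
    intro D hD
    rw [Finset.mem_range]
    have := two_card_le N D hD
    omega
  rw [Z0, ← Finset.sum_fiberwise_of_maps_to hmaps]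
  have hbound : ∀ j ∈ Finset.range (N+1),
      (∑ D ∈ (dimerConfigs N).filter (fun D => D.card = j),
        (N:ℝ)^(-(D.card:ℤ)) * Real.exp (a * monomerCount N D))
      ≤ Real.exp 1 * N * Real.exp ((N:ℝ) * p0 a) := by
    intro j _
    have hconst : ∀ D ∈ (dimerConfigs N).filter (fun D => D.card = j),
        (N:ℝ)^(-(D.card:ℤ)) * Real.exp (a * monomerCount N D)
        = (N:ℝ)^(-(j:ℤ)) * Real.exp (a * ((N:ℝ) - 2*j)) := by
      intro D hD
      have hc := (Finset.mem_filter.mp hD).2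
      rw [monomerCount, hc]
    rw [Finset.sum_congr rfl hconst, Finset.sum_const, nsmul_eq_mul]
    by_cases hj : 2*j ≤ N
    · -- use the counting bound and the term bound
      have hmc := matching_count N j
      have hmcR : (((dimerConfigs N).filter (fun D => D.card = j)).card : ℝ)
          * ((j.factorial : ℝ) * 2^j) ≤ (N.descFactorial (2*j) : ℝ) := by
        exact_mod_cast hmc
      have hcpos : (0:ℝ) < (j.factorial : ℝ) * 2^j := by positivity
      have hwnonneg : (0:ℝ) ≤ (N:ℝ)^(-(j:ℤ)) * Real.exp (a * ((N:ℝ) - 2*j)) := by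
        have Npos : (0:ℝ) < N := by exact_mod_cast Nat.lt_of_lt_of_le Nat.zero_lt_one hN
        have := zpow_pos Npos (-(j:ℤ))
        positivity
      have hcard_le : (((dimerConfigs N).filter (fun D => D.card = j)).card : ℝ)
          ≤ (N.descFactorial (2*j) : ℝ) / ((j.factorial : ℝ) * 2^j) := by
        rw [le_div_iff₀ hcpos]
        exact hmcR
      have htb := term_bound N j a hN hj
      calc (((dimerConfigs N).filter (fun D => D.card = j)).card : ℝ)
            * ((N:ℝ)^(-(j:ℤ)) * Real.exp (a * ((N:ℝ) - 2*j)))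
          ≤ ((N.descFactorial (2*j) : ℝ) / ((j.factorial : ℝ) * 2^j))
            * ((N:ℝ)^(-(j:ℤ)) * Real.exp (a * ((N:ℝ) - 2*j))) :=
            mul_le_mul_of_nonneg_right hcard_le hwnonneg
        _ ≤ Real.exp 1 * N * Real.exp ((N:ℝ) * p0 a) := by
            rw [div_mul_eq_mul_div, div_le_iff₀ hcpos]
            calc (N.descFactorial (2*j) : ℝ) * ((N:ℝ)^(-(j:ℤ)) * Real.exp (a * ((N:ℝ) - 2*j)))
                ≤ (j.factorial : ℝ) * 2^j * (Real.exp 1 * N * Real.exp ((N:ℝ) * p0 a)) := htb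
              _ = Real.exp 1 * N * Real.exp ((N:ℝ) * p0 a) * ((j.factorial : ℝ) * 2^j) := by ring
    · -- the filter is empty
      have hempty : (dimerConfigs N).filter (fun D => D.card = j) = ∅ := by
        apply Finset.eq_empty_of_forall_notMem
        intro D hD
        have h1 := (Finset.mem_filter.mp hD).1
        have h2 := (Finset.mem_filter.mp hD).2
        have := two_card_le N D h1
        omega
      rw [hempty]
      simp
      positivity
  calc (∑ j ∈ Finset.range (N+1), ∑ D ∈ (dimerConfigs N).filter (fun D => D.card = j),
        (N:ℝ)^(-(D.card:ℤ)) * Real.exp (a * monomerCount N D))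
      ≤ ∑ _j ∈ Finset.range (N+1), Real.exp 1 * N * Real.exp ((N:ℝ) * p0 a) :=
        Finset.sum_le_sum hbound
    _ = ((N:ℝ)+1) * (Real.exp 1 * N * Real.exp ((N:ℝ) * p0 a)) := by
        rw [Finset.sum_const, Finset.card_range, nsmul_eq_mul]
        push_cast
        ring

end LaplaceAux

/-- away from the global maximum points of `p̃`, the integral of
`e^{N·F_N}` is exponentially negligible with respect to `e^{N·M}`,
`M = max p̃`. -/
theorem laplace_cutoff (h J : ℝ) (hJ : 0 < J) (C : Set ℝ) (hC : IsClosed C)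
    (hCnomax : ∀ x ∈ C, ¬ (∀ y : ℝ, ptilde h J y ≤ ptilde h J x)) :
    ∃ ε > (0:ℝ), ∃ B : ℝ, ∀ N : ℕ, 1 ≤ N →
      Real.exp (-(N : ℝ) * sSup (Set.range (ptilde h J))) *
        ∫ x in C, Real.exp ((N : ℝ) * FN h J N x)
      ≤ B * Real.exp (-(N : ℝ) * ε) := by
  classical
  open LaplaceAux in
  set M := sSup (Set.range (ptilde h J)) with hMdef
  set c₁ := 2*J + Real.log 2 + |h - J| with hc₁
  -- upper bound on ptilde
  have hup : ∀ x : ℝ, ptilde h J x ≤ -(J/2)*x^2 + c₁ := by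
    intro x
    simp only [ptilde]
    have hp := LaplaceAux.p0_le ((2*x - 1)*J + h)
    have habs1 : |(2*x - 1)*J + h| = |2*J*x + (h - J)| := by
      congr 1
      ring
    have habs2 : |2*J*x + (h - J)| ≤ |2*J*x| + |h - J| := abs_add_le _ _
    have habs3 : |2*J*x| = 2*J*|x| := by
      rw [abs_mul, abs_of_pos (by linarith : (0:ℝ) < 2*J)]
    have hmax : max ((2*x - 1)*J + h) 0 ≤ |(2*x - 1)*J + h| :=
      max_le (le_abs_self _) (abs_nonneg _)
    have hquad : -J*x^2 + 2*J*|x| ≤ -(J/2)*x^2 + 2*J := by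
      nlinarith [mul_nonneg (le_of_lt hJ) (sq_nonneg (|x| - 2)), sq_abs x]
    rw [hc₁]
    linarith [hp, hmax, habs1 ▸ habs2, habs3 ▸ (habs1 ▸ habs2)]
  have hub : ∀ y : ℝ, ptilde h J y ≤ c₁ := by
    intro y
    have := hup y
    nlinarith [sq_nonneg y]
  have hbdd : BddAbove (Set.range (ptilde h J)) := by
    refine ⟨c₁, ?_⟩
    rintro y ⟨x, rfl⟩
    exact hub x
  have hle_M : ∀ y : ℝ, ptilde h J y ≤ M := fun y => le_csSup hbdd ⟨y, rfl⟩
  -- continuity of ptilde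
  have hgc : Continuous gFun := by
    unfold gFun
    fun_prop
  have hp0c : Continuous p0 := by
    unfold p0
    have h1 : Continuous fun a => Real.log (1 - gFun a) :=
      Continuous.log (continuous_const.sub hgc) (fun x => ne_of_gt (LaplaceAux.one_sub_g_pos x))
    fun_prop
  have hptc : Continuous (ptilde h J) := by
    unfold ptilde
    fun_prop
  -- the gap δ on C
  obtain ⟨δ, hδpos, hδle1, hδC⟩ :
      ∃ δ : ℝ, 0 < δ ∧ δ ≤ 1 ∧ ∀ x ∈ C, ptilde h J x ≤ M - δ := by
    set R := Real.sqrt ((2/J) * (c₁ + 1 - ptilde h J 0)) with hR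
    have harg : 0 ≤ (2/J) * (c₁ + 1 - ptilde h J 0) := by
      have := hub 0
      have h2J : (0:ℝ) ≤ 2/J := by positivity
      nlinarith
    have htail : ∀ x : ℝ, R ≤ |x| → ptilde h J x ≤ ptilde h J 0 - 1 := by
      intro x hx
      have h2 : R^2 ≤ |x|^2 := pow_le_pow_left₀ (Real.sqrt_nonneg _) hx 2
      rw [hR, Real.sq_sqrt harg, sq_abs] at h2
      have h3 := hup x
      have h4 : (J/2) * ((2/J) * (c₁ + 1 - ptilde h J 0)) = c₁ + 1 - ptilde h J 0 := by
        field_simp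
      have h5 : (J/2) * ((2/J) * (c₁ + 1 - ptilde h J 0)) ≤ (J/2) * x^2 :=
        mul_le_mul_of_nonneg_left h2 (by positivity)
      linarith
    by_cases hK : (C ∩ Set.Icc (-R) R).Nonempty
    · have hKcomp : IsCompact (C ∩ Set.Icc (-R) R) := (isCompact_Icc).inter_left hC
      obtain ⟨z, hzK, hzmax⟩ := hKcomp.exists_isMaxOn hK hptc.continuousOn
      have hzC : z ∈ C := hzK.1
      have hzlt : ptilde h J z < M := by
        have hno := hCnomax z hzC
        push_neg at hno
        obtain ⟨y, hy⟩ := hno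
        exact lt_of_lt_of_le hy (hle_M y)
      refine ⟨min 1 (M - ptilde h J z), lt_min one_pos (by linarith), min_le_left _ _, ?_⟩
      intro x hxC
      by_cases hxI : x ∈ Set.Icc (-R) R
      · have hmax := (isMaxOn_iff.mp hzmax) x ⟨hxC, hxI⟩
        have hm2 := min_le_right 1 (M - ptilde h J z)
        linarith
      · have hxR : R ≤ |x| := by
          by_contra habs
          push_neg at habs
          exact hxI (Set.mem_Icc.mpr ⟨(abs_lt.mp habs).1.le, (abs_lt.mp habs).2.le⟩)
        have ht := htail x hxR
        have h0M := hle_M 0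
        have hm1 := min_le_left 1 (M - ptilde h J z)
        linarith
    · refine ⟨1, one_pos, le_refl 1, ?_⟩
      intro x hxC
      have hxR : R ≤ |x| := by
        by_contra habs
        push_neg at habs
        exact hK ⟨x, hxC, Set.mem_Icc.mpr ⟨(abs_lt.mp habs).1.le, (abs_lt.mp habs).2.le⟩⟩
      have ht := htail x hxR
      have h0M := hle_M 0
      linarith
  -- the Gaussian dominator
  have hgint : Integrable (fun x : ℝ => Real.exp c₁ * Real.exp (-(J/2) * x^2)) :=
    (integrable_exp_neg_mul_sq (by positivity : (0:ℝ) < J/2)).const_mul _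
  set I₀ := ∫ x : ℝ, Real.exp c₁ * Real.exp (-(J/2)*x^2) with hI₀
  have hI₀nonneg : 0 ≤ I₀ := integral_nonneg (fun x => by positivity)
  refine ⟨δ/2, by positivity, Real.exp 1 * Real.exp (δ - M) * I₀ * (32/δ^2), ?_⟩
  intro N hN
  have Npos : (0:ℝ) < N := by exact_mod_cast Nat.lt_of_lt_of_le Nat.zero_lt_one hN
  have hN1 : (1:ℝ) ≤ (N:ℝ) := by exact_mod_cast hN
  -- pointwise bound on the integrand over C
  set A := ((N:ℝ)+1) * Real.exp 1 * N * Real.exp (((N:ℝ)-1)*(M-δ)) with hA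
  have hAnn : (0:ℝ) ≤ A := by positivity
  have hptw : ∀ x ∈ C, Real.exp ((N:ℝ) * FN h J N x)
      ≤ A * (Real.exp c₁ * Real.exp (-(J/2)*x^2)) := by
    intro x hxC
    have hZ := LaplaceAux.Z0_pos N (2*J*x + h - J)
    have hexp : Real.exp ((N:ℝ) * FN h J N x)
        = Real.exp ((N:ℝ) * (-J * x^2)) * Z0 N (2*J*x + h - J) := by
      simp only [FN, p0N]
      rw [mul_add, Real.exp_add]
      congr 1
      rw [show (N:ℝ) * (1/(N:ℝ) * Real.log (Z0 N (2*J*x + h - J)))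
          = Real.log (Z0 N (2*J*x + h - J)) by field_simp]
      exact Real.exp_log hZ
    have hZle := LaplaceAux.Z0_le N (2*J*x + h - J) hN
    have h1 : Real.exp ((N:ℝ) * FN h J N x)
        ≤ ((N:ℝ)+1) * Real.exp 1 * N * Real.exp ((N:ℝ) * ptilde h J x) := by
      rw [hexp]
      calc Real.exp ((N:ℝ) * (-J * x^2)) * Z0 N (2*J*x + h - J)
          ≤ Real.exp ((N:ℝ) * (-J * x^2))
            * (((N:ℝ)+1) * (Real.exp 1 * N * Real.exp ((N:ℝ) * p0 (2*J*x + h - J)))) :=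
            mul_le_mul_of_nonneg_left hZle (le_of_lt (Real.exp_pos _))
        _ = ((N:ℝ)+1) * Real.exp 1 * N
            * (Real.exp ((N:ℝ) * (-J * x^2)) * Real.exp ((N:ℝ) * p0 (2*J*x + h - J))) := by
            ring
        _ = ((N:ℝ)+1) * Real.exp 1 * N * Real.exp ((N:ℝ) * ptilde h J x) := by
            rw [← Real.exp_add]
            congr 2
            simp only [ptilde]
            rw [show (2*x - 1)*J + h = 2*J*x + h - J by ring]
            ring
    have h2 : (N:ℝ) * ptilde h J x ≤ ((N:ℝ)-1)*(M-δ) + (-(J/2)*x^2 + c₁) := by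
      have hp1 : ptilde h J x ≤ M - δ := hδC x hxC
      have hp2 : ptilde h J x ≤ -(J/2)*x^2 + c₁ := hup x
      nlinarith [mul_le_mul_of_nonneg_left hp1 (show (0:ℝ) ≤ (N:ℝ) - 1 by linarith)]
    calc Real.exp ((N:ℝ) * FN h J N x)
        ≤ ((N:ℝ)+1) * Real.exp 1 * N * Real.exp ((N:ℝ) * ptilde h J x) := h1
      _ ≤ ((N:ℝ)+1) * Real.exp 1 * N
          * Real.exp (((N:ℝ)-1)*(M-δ) + (-(J/2)*x^2 + c₁)) :=
          mul_le_mul_of_nonneg_left (Real.exp_le_exp.mpr h2) (by positivity)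
      _ = A * (Real.exp c₁ * Real.exp (-(J/2)*x^2)) := by
          rw [hA, Real.exp_add, Real.exp_add]
          ring
  -- integral bound
  have hfnn : 0 ≤ᵐ[volume.restrict C] fun x => Real.exp ((N:ℝ) * FN h J N x) :=
    ae_of_all _ (fun x => (Real.exp_pos _).le)
  have hgint' : Integrable (fun x => A * (Real.exp c₁ * Real.exp (-(J/2)*x^2)))
      (volume.restrict C) := (hgint.const_mul A).restrict
  have hle_ae : (fun x => Real.exp ((N:ℝ) * FN h J N x))
       ≤ᵐ[volume.restrict C] fun x => A * (Real.exp c₁ * Real.exp (-(J/2)*x^2)) := by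
    refine (ae_restrict_iff' hC.measurableSet).mpr (ae_of_all _ ?_)
    exact hptw
  have hint1 : (∫ x in C, Real.exp ((N:ℝ) * FN h J N x))
      ≤ ∫ x in C, A * (Real.exp c₁ * Real.exp (-(J/2)*x^2)) :=
    integral_mono_of_nonneg hfnn hgint' hle_ae
  have hint2 : (∫ x in C, A * (Real.exp c₁ * Real.exp (-(J/2)*x^2)))
      = A * ∫ x in C, Real.exp c₁ * Real.exp (-(J/2)*x^2) := integral_const_mul A _
  have hint3 : (∫ x in C, Real.exp c₁ * Real.exp (-(J/2)*x^2)) ≤ I₀ := by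
    rw [hI₀]
    exact setIntegral_le_integral hgint (ae_of_all _ (fun x => by positivity))
  have hintC : (∫ x in C, Real.exp ((N:ℝ) * FN h J N x)) ≤ A * I₀ := by
    calc (∫ x in C, Real.exp ((N:ℝ) * FN h J N x))
        ≤ ∫ x in C, A * (Real.exp c₁ * Real.exp (-(J/2)*x^2)) := hint1
      _ = A * ∫ x in C, Real.exp c₁ * Real.exp (-(J/2)*x^2) := hint2
      _ ≤ A * I₀ := mul_le_mul_of_nonneg_left hint3 hAnn
  -- numerics
  have claimN : ((N:ℝ)+1)*N*Real.exp (-(N:ℝ)*δ) ≤ (32/δ^2) * Real.exp (-(N:ℝ)*(δ/2)) := by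
    have t1 : (N:ℝ)*δ/4 + 1 ≤ Real.exp ((N:ℝ)*δ/4) := Real.add_one_le_exp _
    have hq : ((N:ℝ)*δ/4)^2 ≤ Real.exp ((N:ℝ)*δ/4)^2 :=
      pow_le_pow_left₀ (by positivity) (by linarith) 2
    have t2 : Real.exp ((N:ℝ)*δ/4)^2 = Real.exp ((N:ℝ)*(δ/2)) := by
      rw [sq, ← Real.exp_add]
      congr 1
      ring
    have hq2 : ((N:ℝ)*δ/4)^2 ≤ Real.exp ((N:ℝ)*(δ/2)) := t2 ▸ hq
    have step : ((N:ℝ)+1)*N*δ^2 ≤ 32 * Real.exp ((N:ℝ)*(δ/2)) := by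
      nlinarith [hq2, mul_nonneg (mul_nonneg (sub_nonneg.mpr hN1) (le_of_lt Npos)) (sq_nonneg δ)]
    have step2 : ((N:ℝ)+1)*N ≤ (32/δ^2) * Real.exp ((N:ℝ)*(δ/2)) := by
      rw [div_mul_eq_mul_div, le_div_iff₀ (by positivity : (0:ℝ) < δ^2)]
      calc ((N:ℝ)+1)*N*δ^2 ≤ 32 * Real.exp ((N:ℝ)*(δ/2)) := step
        _ = 32 * Real.exp ((N:ℝ)*(δ/2)) := rfl
    have hmul := mul_le_mul_of_nonneg_right step2 (le_of_lt (Real.exp_pos (-(N:ℝ)*δ)))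
    calc ((N:ℝ)+1)*N*Real.exp (-(N:ℝ)*δ)
        ≤ (32/δ^2) * Real.exp ((N:ℝ)*(δ/2)) * Real.exp (-(N:ℝ)*δ) := hmul
      _ = (32/δ^2) * Real.exp (-(N:ℝ)*(δ/2)) := by
          rw [mul_assoc, ← Real.exp_add]
          congr 2
          ring
  have hsplit : Real.exp (-(N:ℝ)*M) * (A * I₀)
      = ((N:ℝ)+1)*N*Real.exp (-(N:ℝ)*δ) * (Real.exp 1 * Real.exp (δ - M) * I₀) := by
    rw [hA]
    have harg : Real.exp (-(N:ℝ)*M) * Real.exp (((N:ℝ)-1)*(M-δ))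
        = Real.exp (-(N:ℝ)*δ) * Real.exp (δ - M) := by
      rw [← Real.exp_add, ← Real.exp_add]
      congr 1
      ring
    calc Real.exp (-(N:ℝ)*M) * (((N:ℝ)+1) * Real.exp 1 * N * Real.exp (((N:ℝ)-1)*(M-δ)) * I₀)
        = ((N:ℝ)+1) * Real.exp 1 * N * I₀
          * (Real.exp (-(N:ℝ)*M) * Real.exp (((N:ℝ)-1)*(M-δ))) := by ring
      _ = ((N:ℝ)+1) * Real.exp 1 * N * I₀
          * (Real.exp (-(N:ℝ)*δ) * Real.exp (δ - M)) := by rw [harg]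
      _ = ((N:ℝ)+1)*N*Real.exp (-(N:ℝ)*δ) * (Real.exp 1 * Real.exp (δ - M) * I₀) := by ring
  calc Real.exp (-(N:ℝ)*M) * ∫ x in C, Real.exp ((N:ℝ) * FN h J N x)
      ≤ Real.exp (-(N:ℝ)*M) * (A * I₀) :=
        mul_le_mul_of_nonneg_left hintC (le_of_lt (Real.exp_pos _))
    _ = ((N:ℝ)+1)*N*Real.exp (-(N:ℝ)*δ) * (Real.exp 1 * Real.exp (δ - M) * I₀) := hsplit
    _ ≤ (32/δ^2) * Real.exp (-(N:ℝ)*(δ/2)) * (Real.exp 1 * Real.exp (δ - M) * I₀) :=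
        mul_le_mul_of_nonneg_right claimN (by positivity)
    _ = Real.exp 1 * Real.exp (δ - M) * I₀ * (32/δ^2) * Real.exp (-(N:ℝ)*(δ/2)) := by ring

end
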